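/- Let t_{bag} be the deterministic synchronization tree over {a,b,c,d} whose vertices are the words w ∈ {a,b,c,d}* such that every prefix of w has at least as many a's as b's and at least as many c's as d's, with an edge labelled x from w to wx whenever both are vertices, and an ex-edge from each vertex w satisfying #a(w)=#b(w) and #c(w)=#d(w). Then the path language of t_{bag} is not context-free. -/

import Mathlib

/-- A rooted edge-labelled graph used to represent synchronization trees over an
alphabet `A`.  Edge labels are in `Option A`, where `none` is the special
exit (termination) label `ex` and `some a` is an action label `a ∈ A`. -/
structure SyncTree (A : Type) where
  V : Type
  root : V
  edge : V → Option A → V → Prop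

namespace SyncTree

variable {A : Type}

/-- Reachability along edges. -/
def Reaches (t : SyncTree A) (u v : t.V) : Prop :=
  Relation.ReflTransGen (fun x y => ∃ l, t.edge x l y) u v

/-- `t` is a genuine synchronization tree: every vertex is reachable from the
root, every vertex has at most one incoming edge, the root has no incoming
edge, and targets of exit edges are leaves. -/
def IsTree (t : SyncTree A) : Prop :=
  (∀ v, t.Reaches t.root v) ∧
  (∀ u₁ u₂ l₁ l₂ v, t.edge u₁ l₁ v → t.edge u₂ l₂ v → u₁ = u₂ ∧ l₁ = l₂) ∧
  (∀ u l, ¬ t.edge u l t.root) ∧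
  (∀ u v, t.edge u none v → ∀ l w, ¬ t.edge v l w)

/-- No vertex has two equally-labelled outgoing edges. -/
def Deterministic (t : SyncTree A) : Prop :=
  ∀ u l v₁ v₂, t.edge u l v₁ → t.edge u l v₂ → v₁ = v₂

/-- Bisimilarity of the trees `t` and `t'`. -/
def Bisimilar (t t' : SyncTree A) : Prop :=
  ∃ R : t.V → t'.V → Prop,
    R t.root t'.root ∧
    (∀ u u', R u u' → ∀ l v, t.edge u l v → ∃ v', t'.edge u' l v' ∧ R v v') ∧
    (∀ u u', R u u' → ∀ l v', t'.edge u' l v' → ∃ v, t.edge u l v ∧ R v v')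

/-- The reachable vertices of `t` (the vertices of the tree proper). -/
def Rt (t : SyncTree A) : Type := {v : t.V // t.Reaches t.root v}

/-- An isomorphism between (the reachable parts of) two synchronization trees:
a bijection on vertices preserving the root, the edges and the labels. -/
structure Isomorphism (t t' : SyncTree A) where
  toEquiv : t.Rt ≃ t'.Rt
  map_root : (toEquiv ⟨t.root, Relation.ReflTransGen.refl⟩).1 = t'.root
  map_edge : ∀ (u v : t.Rt) (l : Option A),
    t.edge u.1 l v.1 ↔ t'.edge (toEquiv u).1 l (toEquiv v).1

def Isomorphic (t t' : SyncTree A) : Prop := Nonempty (t.Isomorphism t')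

/-- A morphism of synchronization trees: a function on vertices preserving the
root, the edges and the labels. -/
structure Hom (t t' : SyncTree A) where
  toFun : t.V → t'.V
  map_root : toFun t.root = t'.root
  map_edge : ∀ u l v, t.edge u l v → t'.edge (toFun u) l (toFun v)

/-- `LabeledPath t u w v` : there is a path of `A`-labelled edges from `u` to
`v` whose labels spell the word `w`. -/
inductive LabeledPath (t : SyncTree A) : t.V → List A → t.V → Prop
  | refl (v : t.V) : LabeledPath t v [] v
  | step {u v w : t.V} {a : A} {word : List A} :
      t.edge u (some a) v → LabeledPath t v word w → LabeledPath t u (a :: word) w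

/-- The path language of `t`: the words in `A*` labelling a path from the root
to the source of an exit edge. -/
def pathLanguage (t : SyncTree A) : Language A :=
  { w | ∃ u v, t.LabeledPath t.root w u ∧ t.edge u none v }

/-- The tree `0` with a single vertex and no edges. -/
def zero : SyncTree A := ⟨PUnit, PUnit.unit, fun _ _ _ => False⟩

/-- The tree `1` with a single exit edge. -/
def one : SyncTree A := ⟨Bool, false, fun u l v => u = false ∧ l = none ∧ v = true⟩

/-- The tree denoted by the letter `a`: an `a`-edge followed by an exit edge. -/
def letter (a : A) : SyncTree A :=
  ⟨Fin 3, 0, fun u l v => (u = 0 ∧ l = some a ∧ v = 1) ∨ (u = 1 ∧ l = none ∧ v = 2)⟩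

/-- The sum `t + t'`, obtained by merging the roots of disjoint copies. -/
def sum (t t' : SyncTree A) : SyncTree A where
  V := t.V ⊕ t'.V
  root := Sum.inl t.root
  edge u l v :=
    match u, v with
    | Sum.inl x, Sum.inl y => t.edge x l y
    | Sum.inl x, Sum.inr y => x = t.root ∧ t'.edge t'.root l y
    | Sum.inr x, Sum.inr y => t'.edge x l y
    | Sum.inr _, Sum.inl _ => False

/-- The exit edges of `t`. -/
def ExE (t : SyncTree A) : Type := {p : t.V × t.V // t.edge p.1 none p.2}

/-- The sequential product `t · t'`, obtained by replacing each exit edge of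
`t` by a fresh copy of `t'`. -/
def seq (t t' : SyncTree A) : SyncTree A where
  V := t.V ⊕ (t.ExE × t'.V)
  root := Sum.inl t.root
  edge u l v :=
    match u, v with
    | Sum.inl x, Sum.inl y => (∃ a, l = some a) ∧ t.edge x l y
    | Sum.inl x, Sum.inr p => p.1.1.1 = x ∧ t'.edge t'.root l p.2
    | Sum.inr p, Sum.inr q => p.1 = q.1 ∧ t'.edge p.2 l q.2
    | Sum.inr _, Sum.inl _ => False

end SyncTree

open SyncTree

/-- The four-letter alphabet `{a, b, c, d}`. -/
inductive Bag : Type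
  | a | b | c | d
deriving DecidableEq

/-- Valid histories of the bag: every prefix has at least as many `a`'s as
`b`'s and at least as many `c`'s as `d`'s. -/
def BagValid (w : List Bag) : Prop :=
  ∀ p, p <+: w → p.count Bag.b ≤ p.count Bag.a ∧ p.count Bag.d ≤ p.count Bag.c

lemma bagValid_nil : BagValid [] := by
  intro p hp
  have h := List.prefix_nil.mp hp
  subst h; simp

/-- The synchronization tree of the bag over a two-element value domain: the
vertices are the valid words over `{a,b,c,d}` (with a second copy serving as
targets of exit edges), with an `x`-labelled edge from `w` to `wx` whenever
both are valid, and an exit edge from each vertex `w` with `#a(w) = #b(w)` and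
`#c(w) = #d(w)`. -/
def bagTree : SyncTree Bag where
  V := {w : List Bag // BagValid w} ⊕ {w : List Bag // BagValid w}
  root := Sum.inl ⟨[], bagValid_nil⟩
  edge u l v :=
    match u, v with
    | Sum.inl w, Sum.inl w' => ∃ x : Bag, l = some x ∧ w'.1 = w.1 ++ [x]
    | Sum.inl w, Sum.inr w' => l = none ∧ w' = w ∧
        w.1.count Bag.a = w.1.count Bag.b ∧ w.1.count Bag.c = w.1.count Bag.d
    | _, _ => False


set_option linter.constructorNameAsVariable false
set_option linter.unnecessarySeqFocus false

open ContextFreeGrammar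
namespace CFPump
variable {T : Type}
mutual
inductive PT (g : ContextFreeGrammar.{0} T) : g.NT → List T → Type
  | node {n : g.NT} {w : List T} (r : ContextFreeRule T g.NT) (hr : r ∈ g.rules)
      (hn : r.input = n) (c : PTs g r.output w) : PT g n w
inductive PTs (g : ContextFreeGrammar.{0} T) : List (Symbol T g.NT) → List T → Type
  | nil : PTs g [] []
  | consT (t : T) {s w} (c : PTs g s w) : PTs g (Symbol.terminal t :: s) (t :: w)
  | consN {n w₁ s w₂} (d : PT g n w₁) (c : PTs g s w₂) :
      PTs g (Symbol.nonterminal n :: s) (w₁ ++ w₂)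
end

variable {g : ContextFreeGrammar.{0} T}

def PT.cast {n w w'} (hw : w = w') (d : PT g n w) : PT g n w' := hw ▸ d
def PTs.cast {s s' w w'} (hs : s = s') (hw : w = w') (c : PTs g s w) : PTs g s' w' :=
  hs ▸ hw ▸ c

def PTs.allTerm : (w : List T) → PTs g (w.map Symbol.terminal) w
  | [] => .nil
  | t :: w => .consT t (allTerm w)

def PTs.join : ∀ {s₁ w₁ s₂ w₂}, PTs g s₁ w₁ → PTs g s₂ w₂ → PTs g (s₁ ++ s₂) (w₁ ++ w₂)
  | _, _, _, _, .nil, c₂ => c₂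
  | _, _, _, _, .consT t c, c₂ => .consT t (c.join c₂)
  | _, _, _, _, .consN d c, c₂ => (PTs.consN d (c.join c₂)).cast rfl (List.append_assoc ..).symm

theorem PTs.split : ∀ (s₁ : List (Symbol T g.NT)) {s₂ w}, PTs g (s₁ ++ s₂) w →
    ∃ w₁ w₂, w = w₁ ++ w₂ ∧ Nonempty (PTs g s₁ w₁) ∧ Nonempty (PTs g s₂ w₂)
  | [], _, w, c => ⟨[], w, rfl, ⟨.nil⟩, ⟨c⟩⟩
  | x :: s₁, s₂, w, c => by
    cases c with
    | consT t c =>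
      obtain ⟨w₁, w₂, rfl, ⟨c₁⟩, ⟨c₂⟩⟩ := PTs.split s₁ c
      exact ⟨t :: w₁, w₂, rfl, ⟨.consT t c₁⟩, ⟨c₂⟩⟩
    | consN d c =>
      obtain ⟨w₁, w₂, rfl, ⟨c₁⟩, ⟨c₂⟩⟩ := PTs.split s₁ c
      exact ⟨_ ++ w₁, w₂, (List.append_assoc ..).symm, ⟨.consN d c₁⟩, ⟨c₂⟩⟩

theorem derives_to_tree {s : List (Symbol T g.NT)} {w : List T}
    (h : g.Derives s (w.map Symbol.terminal)) : Nonempty (PTs g s w) := by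
  induction h using Relation.ReflTransGen.head_induction_on with
  | refl => exact ⟨PTs.allTerm w⟩
  | head hp _ ih =>
    obtain ⟨r, hr, hrw⟩ := hp
    obtain ⟨p, q, rfl, rfl⟩ := hrw.exists_parts
    obtain ⟨w₁, w', hw, ⟨c₁⟩, ⟨c'⟩⟩ := PTs.split p (ih.some.cast (List.append_assoc ..) rfl)
    obtain ⟨w₂, w₃, hw', ⟨cm⟩, ⟨c₃⟩⟩ := PTs.split r.output c'
    subst hw hw'
    exact ⟨(c₁.join ((PTs.consN (PT.node r hr rfl cm) c₃))).cast
      (by simp) rfl⟩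

theorem mem_language_tree {w : List T} (h : w ∈ g.language) :
    Nonempty (PT g g.initial w) := by
  obtain ⟨c⟩ := derives_to_tree ((mem_language_iff g w).mp h)
  cases c with
  | consN d c =>
    cases c with
    | nil => exact ⟨d.cast (by simp)⟩
mutual
theorem PT.derives : ∀ {n w}, PT g n w →
    g.Derives [Symbol.nonterminal n] (w.map Symbol.terminal)
  | _, _, .node r hr hn c => by
    subst hn
    exact (Produces.single ⟨r, hr, by simpa using ContextFreeRule.Rewrites.input_output⟩).trans
      c.derives
theorem PTs.derives : ∀ {s w}, PTs g s w → g.Derives s (w.map Symbol.terminal)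
  | _, _, .nil => by exact Derives.refl []
  | _, _, .consT t c => by
    simpa using c.derives.append_left [Symbol.terminal t]
  | _, _, .consN (w₁ := w₁) (s := s) (w₂ := w₂) d c => by
    have h1 := d.derives.append_right s
    have h2 := c.derives.append_left (w₁.map Symbol.terminal)
    simpa using h1.trans h2
end


def M (g : ContextFreeGrammar.{0} T) : ℕ := (g.rules.sup fun r => r.output.length) ⊔ 1

theorem one_le_M : 1 ≤ M g := le_max_right _ _
theorem out_le_M {r : ContextFreeRule T g.NT} (hr : r ∈ g.rules) : r.output.length ≤ M g :=
  le_trans (Finset.le_sup (f := fun r => r.output.length) hr) (le_max_left _ _)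

mutual
def PT.size {g : ContextFreeGrammar.{0} T} : ∀ {n w}, PT g n w → ℕ
  | _, _, .node _ _ _ c => c.size + 1
def PTs.size {g : ContextFreeGrammar.{0} T} : ∀ {s w}, PTs g s w → ℕ
  | _, _, .nil => 0
  | _, _, .consT _ c => c.size
  | _, _, .consN d c => d.size + c.size
end

mutual
def PT.height {g : ContextFreeGrammar.{0} T} : ∀ {n w}, PT g n w → ℕ
  | _, _, .node _ _ _ c => c.height + 1
def PTs.height {g : ContextFreeGrammar.{0} T} : ∀ {s w}, PTs g s w → ℕ
  | _, _, .nil => 0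
  | _, _, .consT _ c => c.height
  | _, _, .consN d c => max d.height c.height
end

mutual
theorem PT.len_le : ∀ {n w} (d : PT g n w), w.length ≤ M g ^ d.height
  | _, _, .node r hr _ c => by
    have h1 := c.len_le
    have h2 := out_le_M hr
    calc _ ≤ r.output.length * M g ^ c.height := h1
    _ ≤ M g * M g ^ c.height := Nat.mul_le_mul_right _ h2
    _ = M g ^ (PT.height (.node r hr ‹_› c)) := by rw [PT.height]; ring
theorem PTs.len_le : ∀ {s w} (c : PTs g s w), w.length ≤ s.length * M g ^ c.height
  | _, _, .nil => le_refl 0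
  | _, _, .consT t c => by
    have h1 := c.len_le
    have h2 : 1 ≤ M g ^ c.height := Nat.one_le_pow _ _ one_le_M
    simp only [List.length_cons, PTs.height]
    calc _ ≤ (_ : ℕ) + 1 := Nat.add_le_add_right h1 1
    _ ≤ _ := by nlinarith
  | _, _, .consN d c => by
    have h1 := d.len_le
    have h2 := c.len_le
    have hd : M g ^ d.height ≤ M g ^ (max d.height c.height) :=
      Nat.pow_le_pow_right one_le_M (le_max_left _ _)
    have hc : M g ^ c.height ≤ M g ^ (max d.height c.height) :=
      Nat.pow_le_pow_right one_le_M (le_max_right _ _)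
    simp only [List.length_append, List.length_cons, PTs.height]
    calc _ ≤ M g ^ d.height + _ := Nat.add_le_add h1 h2
    _ ≤ M g ^ (max d.height c.height) + _ * M g ^ (max d.height c.height) := by
        exact Nat.add_le_add hd (Nat.mul_le_mul_left _ hc)
    _ = _ := by ring
end

theorem PT.size_cast {n w w'} (hw : w = w') (d : PT g n w) : (d.cast hw).size = d.size := by
  subst hw; rfl
theorem PTs.size_cast {s s' w w'} (hs : s = s') (hw : w = w') (c : PTs g s w) :
    (c.cast hs hw).size = c.size := by subst hs; subst hw; rfl

theorem PTs.join_size : ∀ {s₁ w₁ s₂ w₂} (c₁ : PTs g s₁ w₁) (c₂ : PTs g s₂ w₂),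
    (c₁.join c₂).size = c₁.size + c₂.size
  | _, _, _, _, .nil, c₂ => by simp [PTs.join, PTs.size]
  | _, _, _, _, .consT t c, c₂ => by simp [PTs.join, PTs.size, PTs.join_size c c₂]
  | _, _, _, _, .consN d c, c₂ => by
    simp [PTs.join, PTs.size, PTs.size_cast, PTs.join_size c c₂]; ring

inductive Ctx (g : ContextFreeGrammar.{0} T) : g.NT → g.NT → List T → List T → Type
  | refl (n : g.NT) : Ctx g n n [] []
  | node {n k n' : g.NT} {v₁ y₁ v y : List T} (r : ContextFreeRule T g.NT) (hr : r ∈ g.rules)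
      (hn : r.input = n) (s₁ s₂ : List (Symbol T g.NT))
      (hout : r.output = s₁ ++ Symbol.nonterminal k :: s₂)
      (c₁ : PTs g s₁ v₁) (c₂ : PTs g s₂ y₁) (c : Ctx g k n' v y) :
      Ctx g n n' (v₁ ++ v) (y ++ y₁)

def Ctx.cast {n n' v v' y y'} (hv : v = v') (hy : y = y') (c : Ctx g n n' v y) :
    Ctx g n n' v' y' := hv ▸ hy ▸ c

def Ctx.csize : ∀ {n n' v y}, Ctx g n n' v y → ℕ
  | _, _, _, _, .refl _ => 0
  | _, _, _, _, .node _ _ _ _ _ _ c₁ c₂ c => c₁.size + c₂.size + c.csize + 1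

theorem Ctx.csize_cast {n n' v v' y y'} (hv : v = v') (hy : y = y') (c : Ctx g n n' v y) :
    (c.cast hv hy).csize = c.csize := by subst hv; subst hy; rfl

def Ctx.plug : ∀ {n n' v y x}, Ctx g n n' v y → PT g n' x → PT g n (v ++ x ++ y)
  | _, _, _, _, _, .refl _, d => d.cast (by simp)
  | _, _, _, _, _, .node r hr hn s₁ s₂ hout c₁ c₂ c, d =>
    PT.node r hr hn ((c₁.join (PTs.consN (c.plug d) c₂)).cast hout.symm (by simp))

theorem Ctx.plug_size : ∀ {n n' v y x} (c : Ctx g n n' v y) (d : PT g n' x),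
    (c.plug d).size = c.csize + d.size
  | _, _, _, _, _, .refl _, d => by simp [Ctx.plug, Ctx.csize, PT.size_cast]
  | _, _, _, _, _, .node r hr hn s₁ s₂ hout c₁ c₂ c, d => by
    simp [Ctx.plug, Ctx.csize, PT.size, PTs.size_cast, PTs.join_size, PTs.size,
      Ctx.plug_size c d]
    ring

def Ctx.comp : ∀ {n n' n'' v y v' y'}, Ctx g n n' v y → Ctx g n' n'' v' y' →
    Ctx g n n'' (v ++ v') (y' ++ y)
  | _, _, _, _, _, _, _, .refl _, c' => c'.cast (by simp) (by simp)
  | _, _, _, _, _, _, _, .node r hr hn s₁ s₂ hout c₁ c₂ c, c' =>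
    (Ctx.node r hr hn s₁ s₂ hout c₁ c₂ (c.comp c')).cast (by simp) (by simp)

theorem Ctx.comp_csize : ∀ {n n' n'' v y v' y'} (c : Ctx g n n' v y) (c' : Ctx g n' n'' v' y'),
    (c.comp c').csize = c.csize + c'.csize
  | _, _, _, _, _, _, _, .refl _, c' => by simp [Ctx.comp, Ctx.csize, Ctx.csize_cast]
  | _, _, _, _, _, _, _, .node r hr hn s₁ s₂ hout c₁ c₂ c, c' => by
    simp [Ctx.comp, Ctx.csize, Ctx.csize_cast, Ctx.comp_csize c c']
    ring

theorem Ctx.derives : ∀ {n n' v y}, Ctx g n n' v y →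
    g.Derives [Symbol.nonterminal n]
      (v.map Symbol.terminal ++ [Symbol.nonterminal n'] ++ y.map Symbol.terminal)
  | _, _, _, _, .refl n => by simpa using Derives.refl _
  | _, _, _, _, .node (n' := n') (k := k) (v₁ := v₁) (y₁ := y₁) (v := v) (y := y)
      r hr hn s₁ s₂ hout c₁ c₂ c => by
    subst hn
    have h0 : g.Derives [Symbol.nonterminal r.input] r.output :=
      (Produces.single ⟨r, hr, by simpa using ContextFreeRule.Rewrites.input_output⟩)
    rw [hout] at h0
    have h1 : g.Derives (s₁ ++ Symbol.nonterminal k :: s₂)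
        (v₁.map Symbol.terminal ++ Symbol.nonterminal k :: s₂) :=
      c₁.derives.append_right _
    have h2 : g.Derives (Symbol.nonterminal k :: s₂)
        ((v.map Symbol.terminal ++ [Symbol.nonterminal n'] ++ y.map Symbol.terminal) ++ s₂) :=
      c.derives.append_right s₂
    have h3 := h2.append_left (v₁.map Symbol.terminal)
    have h4 := (c₂.derives).append_left
      (v₁.map Symbol.terminal ++ (v.map Symbol.terminal ++ [Symbol.nonterminal n'] ++
        y.map Symbol.terminal))
    have h5 := ((h0.trans h1).trans h3).trans (by simpa [List.append_assoc] using h4)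
    simpa [List.append_assoc] using h5

theorem join_replicate_succ' (l : List T) (i : ℕ) :
    (List.replicate (i+1) l).flatten = (List.replicate i l).flatten ++ l := by
  induction i with
  | zero => simp
  | succ i ih =>
    rw [List.replicate_succ, List.flatten_cons, ih, ← List.append_assoc, ← List.flatten_cons,
      ← List.replicate_succ, ih]

theorem pump_derives {A : g.NT} {v x y : List T}
    (hA : g.Derives [Symbol.nonterminal A]
      (v.map Symbol.terminal ++ [Symbol.nonterminal A] ++ y.map Symbol.terminal))
    (hx : g.Derives [Symbol.nonterminal A] (x.map Symbol.terminal)) (i : ℕ) :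
    g.Derives [Symbol.nonterminal A]
      ((((List.replicate i v).flatten ++ x ++ (List.replicate i y).flatten).map Symbol.terminal)) := by
  induction i with
  | zero => simpa using hx
  | succ i ih =>
    have h1 := (ih.append_right (y.map Symbol.terminal)).append_left (v.map Symbol.terminal)
    have h2 : g.Derives
        (List.map Symbol.terminal v ++ [Symbol.nonterminal A] ++ List.map Symbol.terminal y)
        (List.map Symbol.terminal
          ((List.replicate (i+1) v).flatten ++ x ++ (List.replicate (i+1) y).flatten)) := by
      rw [join_replicate_succ' y i, List.replicate_succ, List.flatten_cons]
      simpa [List.append_assoc] using h1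
    exact hA.trans h2

theorem PTs.extract : ∀ {s w} (c : PTs g s w), 1 ≤ c.height →
    ∃ (s₁ : List (Symbol T g.NT)) (k : g.NT) (s₂ : List (Symbol T g.NT)) (v₁ x y₁ : List T)
      (c₁ : PTs g s₁ v₁) (d : PT g k x) (c₂ : PTs g s₂ y₁),
      s = s₁ ++ Symbol.nonterminal k :: s₂ ∧ w = v₁ ++ x ++ y₁ ∧
      d.height = c.height ∧ c.size = c₁.size + d.size + c₂.size
  | _, _, .nil, h => by simp [PTs.height] at h
  | _, _, .consT t c, h => by
    obtain ⟨s₁, k, s₂, v₁, x, y₁, c₁, d, c₂, hs, hw, hh, hsz⟩ := c.extract h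
    exact ⟨Symbol.terminal t :: s₁, k, s₂, t :: v₁, x, y₁, .consT t c₁, d, c₂,
      by rw [hs]; rfl, by rw [hw]; rfl, hh, by simpa [PTs.size] using hsz⟩
  | _, _, .consN (n := n) (w₁ := w₁) (s := s) (w₂ := w₂) d c, h => by
    by_cases hc : c.height ≤ d.height
    · refine ⟨[], n, s, [], w₁, w₂, .nil, d, c, rfl, rfl, ?_, ?_⟩
      · simp [PTs.height, Nat.max_eq_left hc]
      · simp [PTs.size]
    · push_neg at hc
      obtain ⟨s₁, k, s₂, v₁, x, y₁, c₁, d', c₂, hs, hw, hh, hsz⟩ := c.extract (by omega)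
      refine ⟨Symbol.nonterminal n :: s₁, k, s₂, w₁ ++ v₁, x, y₁, .consN d c₁, d', c₂,
        by rw [hs]; rfl, by rw [hw]; simp [List.append_assoc], ?_, ?_⟩
      · rw [hh]; simp [PTs.height, Nat.max_eq_right (le_of_lt hc)]
      · simp [PTs.size, hsz]; ring

theorem PT.descend {n w} (d : PT g n w) (hd : 2 ≤ d.height) :
    ∃ (n' : g.NT) (v x y : List T) (c : Ctx g n n' v y) (d' : PT g n' x),
      w = v ++ x ++ y ∧ d'.height + 1 = d.height ∧ d.size = c.csize + d'.size ∧ 1 ≤ c.csize := by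
  obtain ⟨r, hr, hn, c⟩ := d
  have hc : 1 ≤ c.height := by
    have : PT.height (.node r hr hn c) = c.height + 1 := rfl
    omega
  obtain ⟨s₁, k, s₂, v₁, x, y₁, c₁, d', c₂, hs, hw, hh, hsz⟩ := c.extract hc
  refine ⟨k, v₁, x, y₁, (Ctx.node r hr hn s₁ s₂ hs c₁ c₂ (Ctx.refl k)).cast (by simp) (by simp),
    d', hw, ?_, ?_, ?_⟩
  · rw [hh]; rfl
  · rw [Ctx.csize_cast]
    show c.size + 1 = (c₁.size + c₂.size + Ctx.csize (Ctx.refl k) + 1) + d'.size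
    simp [Ctx.csize, hsz]; ring
  · rw [Ctx.csize_cast]; show 1 ≤ c₁.size + c₂.size + Ctx.csize (Ctx.refl k) + 1; omega

open Classical in
noncomputable def allNT (g : ContextFreeGrammar.{0} T) : Finset g.NT :=
  g.rules.biUnion fun r => insert r.input
    ((r.output.filterMap (fun s => match s with
      | Symbol.nonterminal n => some n | _ => none)).toFinset)

theorem PT.root_mem : ∀ {n w}, PT g n w → n ∈ allNT g
  | _, _, .node r hr hn c => by
    classical
    subst hn
    exact Finset.mem_biUnion.mpr ⟨r, hr, by simp⟩

theorem PT.height_pos {n w} (d : PT g n w) : 1 ≤ d.height := by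
  obtain ⟨r, hr, hn, c⟩ := d
  show 1 ≤ c.height + 1
  omega

theorem rep : ∀ (h : ℕ) {n w} (d : PT g n w), d.height ≤ h → ∀ F : Finset g.NT,
    F ⊆ allNT g → (allNT g).card < d.height + F.card →
    (∃ (B : g.NT) (v x y v' y' : List T) (c : Ctx g n B v y) (c' : Ctx g B B v' y')
        (d' : PT g B x),
        w = v ++ (v' ++ x ++ y') ++ y ∧ d.size = c.csize + (c'.csize + d'.size) ∧ 1 ≤ c'.csize)
    ∨ (∃ B, B ∈ F ∧ ∃ (v x y : List T) (c : Ctx g n B v y) (d' : PT g B x),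
        w = v ++ x ++ y ∧ d.size = c.csize + d'.size) := by
  intro h
  induction h with
  | zero => intro n w d hd; exact absurd (d.height_pos.trans hd) (by omega)
  | succ h ih =>
    intro n w d hd F hF hcard
    classical
    by_cases hn : n ∈ F
    · right
      exact ⟨n, hn, [], w, [], Ctx.refl n, d, by simp, by simp [Ctx.csize]⟩
    · have hroot : n ∈ allNT g := d.root_mem
      have hins : insert n F ⊆ allNT g := Finset.insert_subset hroot hF
      have hcard' : F.card + 1 ≤ (allNT g).card := by
        have := Finset.card_le_card hins
        rwa [Finset.card_insert_of_notMem hn] at this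
      have hd2 : 2 ≤ d.height := by omega
      obtain ⟨n₁, v₁, x₁, y₁, c₁, d₁, hw, hh, hsz, hc₁⟩ := d.descend hd2
      have hrec := ih d₁ (by omega) (insert n F) hins
        (by rw [Finset.card_insert_of_notMem hn]; omega)
      rcases hrec with ⟨B, v, x, y, v', y', c, c', d', hw', hsz', hc'⟩ |
        ⟨B, hB, v₂, x₂, y₂, c₂, d₂, hw₂, hsz₂⟩
      · left
        refine ⟨B, v₁ ++ v, x, y ++ y₁, v', y', c₁.comp c, c', d', ?_, ?_, hc'⟩
        · rw [hw, hw']; simp [List.append_assoc]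
        · rw [hsz, hsz', Ctx.comp_csize]; ring
      · rcases Finset.mem_insert.mp hB with hBn | hBF
        · left
          subst hBn
          refine ⟨B, [], x₂, [], v₁ ++ v₂, y₂ ++ y₁, Ctx.refl B, c₁.comp c₂, d₂, ?_, ?_, ?_⟩
          · rw [hw, hw₂]; simp [List.append_assoc]
          · rw [hsz, hsz₂, Ctx.comp_csize]; simp [Ctx.csize]; ring
          · rw [Ctx.comp_csize]; omega
        · right
          refine ⟨B, hBF, v₁ ++ v₂, x₂, y₂ ++ y₁, c₁.comp c₂, d₂, ?_, ?_⟩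
          · rw [hw, hw₂]; simp [List.append_assoc]
          · rw [hsz, hsz₂, Ctx.comp_csize]; ring

theorem chain : ∀ (k : ℕ) {n w} (d : PT g n w), k + 1 ≤ d.height →
    ∃ (n' : g.NT) (v x y : List T) (c : Ctx g n n' v y) (d' : PT g n' x),
      w = v ++ x ++ y ∧ d'.height + k = d.height ∧ d.size = c.csize + d'.size := by
  intro k
  induction k with
  | zero =>
    intro n w d _
    exact ⟨n, [], w, [], Ctx.refl n, d, by simp, by simp, by simp [Ctx.csize]⟩
  | succ k ih =>
    intro n w d hd
    obtain ⟨n₁, v₁, x₁, y₁, c₁, d₁, hw, hh, hsz, _⟩ := d.descend (by omega)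
    obtain ⟨n', v, x, y, c, d', hw', hh', hsz'⟩ := ih d₁ (by omega)
    refine ⟨n', v₁ ++ v, x, y ++ y₁, c₁.comp c, d', ?_, by omega, ?_⟩
    · rw [hw, hw']; simp [List.append_assoc]
    · rw [hsz, hsz', Ctx.comp_csize]; ring

open Classical in
theorem exists_min_tree {w : List T} (hw : w ∈ g.language) :
    ∃ d : PT g g.initial w, ∀ e : PT g g.initial w, d.size ≤ e.size := by
  have hne : ∃ k, ∃ d : PT g g.initial w, d.size = k :=
    ⟨(mem_language_tree hw).some.size, _, rfl⟩
  obtain ⟨d, hd⟩ := Nat.find_spec hne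
  exact ⟨d, fun e => hd ▸ Nat.find_min' hne ⟨e, rfl⟩⟩

theorem cfg_pumping (g : ContextFreeGrammar.{0} T) :
    ∃ p : ℕ, ∀ w ∈ g.language, p ≤ w.length →
      ∃ u v x y z : List T, w = u ++ v ++ x ++ y ++ z ∧ 1 ≤ v.length + y.length ∧
        v.length + x.length + y.length ≤ p ∧
        ∀ i : ℕ, (u ++ (List.replicate i v).flatten ++ x ++ (List.replicate i y).flatten ++ z)
          ∈ g.language := by
  classical
  set K := (allNT g).card with hK
  refine ⟨M g ^ (K + 1) + 1, fun w hw hlen => ?_⟩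
  obtain ⟨dm, hmin⟩ := exists_min_tree hw
  have hlen2 : w.length ≤ M g ^ dm.height := dm.len_le
  have hH : K + 2 ≤ dm.height := by
    by_contra hcon
    push_neg at hcon
    have : M g ^ dm.height ≤ M g ^ (K + 1) := Nat.pow_le_pow_right one_le_M (by omega)
    omega
  obtain ⟨n₀, u₀, x₀, z₀, ctop, d₀, hw₀, hh₀, hsz₀⟩ :=
    chain (dm.height - (K + 1)) dm (by omega)
  have hh₀' : d₀.height = K + 1 := by omega
  have hrep := rep d₀.height d₀ le_rfl ∅ (Finset.empty_subset _) (by rw [hh₀']; simp; omega)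
  rcases hrep with ⟨B, v, x, y, v', y', c, c', d', hwx, hszx, hc'⟩ |
    ⟨B, hB, _⟩
  · refine ⟨u₀ ++ v, v', x, y', y ++ z₀, ?_, ?_, ?_, ?_⟩
    · rw [hw₀, hwx]; simp [List.append_assoc]
    · -- 1 ≤ |v'| + |y'| via minimality
      by_contra hcon
      push_neg at hcon
      have hv' : v' = [] := List.length_eq_zero_iff.mp (by omega)
      have hy' : y' = [] := List.length_eq_zero_iff.mp (by omega)
      subst hv' hy'
      have := hmin ((ctop.plug ((c.plug d').cast (show v ++ x ++ y = x₀ by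
        simpa using hwx.symm))).cast hw₀.symm)
      rw [PT.size_cast, Ctx.plug_size, PT.size_cast, Ctx.plug_size] at this
      omega
    · have : x₀.length = v.length + (v'.length + x.length + y'.length) + y.length := by
        rw [hwx]; simp; ring
      have hx₀ : x₀.length ≤ M g ^ (K + 1) := by
        have := d₀.len_le
        rwa [hh₀'] at this
      omega
    · intro i
      have hctx : g.Derives [Symbol.nonterminal g.initial]
          ((u₀ ++ v).map Symbol.terminal ++ [Symbol.nonterminal B] ++
            ((y ++ z₀).map Symbol.terminal)) := by
        have := (ctop.comp c).derives
        simpa using this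
      have hpump := pump_derives c'.derives d'.derives i
      have h2 := (hpump.append_right ((y ++ z₀).map Symbol.terminal)).append_left
        ((u₀ ++ v).map Symbol.terminal)
      rw [mem_language_iff]
      have hfinal := hctx.trans (by simpa [List.append_assoc] using h2)
      simpa [List.append_assoc] using hfinal
  · exact absurd hB (Finset.notMem_empty B)
end CFPump


namespace BagProof

open SyncTree

lemma bagValid_prefix {w₁ w₂ : List Bag} (h : BagValid (w₁ ++ w₂)) : BagValid w₁ :=
  fun p hp => h p (hp.trans (List.prefix_append _ _))

lemma path_char : ∀ {w : List Bag} {s u : bagTree.V}, bagTree.LabeledPath s w u →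
    ∀ (w₀ : List Bag) (h₀ : BagValid w₀), s = Sum.inl ⟨w₀, h₀⟩ →
    ∃ h : BagValid (w₀ ++ w), u = Sum.inl ⟨w₀ ++ w, h⟩ := by
  intro w s u hp
  induction hp with
  | refl v =>
    intro w₀ h₀ hs
    exact ⟨by simpa using h₀, by simpa using hs⟩
  | @step u' v' u'' a word he hp ih =>
    intro w₀ h₀ hs
    subst hs
    match v', he, hp, ih with
    | Sum.inr w₁, he, _, _ =>
      exact absurd he.1 (by simp)
    | Sum.inl w₁, he, hp, ih =>
      obtain ⟨x, hx, hw₁⟩ := he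
      have hax : a = x := by injection hx
      subst hax
      obtain ⟨h, hu⟩ := ih (w₀ ++ [a]) (hw₁ ▸ w₁.2)
        (congrArg Sum.inl (Subtype.ext hw₁))
      refine ⟨by simpa [List.append_assoc] using h, ?_⟩
      rw [hu]
      simp [List.append_assoc]
      rfl

lemma build_path : ∀ (w w₀ : List Bag) (h : BagValid (w₀ ++ w)) (h₀ : BagValid w₀),
    bagTree.LabeledPath (Sum.inl ⟨w₀, h₀⟩) w (Sum.inl ⟨w₀ ++ w, h⟩)
  | [], w₀, h, h₀ => by
    have : (⟨w₀ ++ [], h⟩ : {w : List Bag // BagValid w}) = ⟨w₀, h₀⟩ := by simp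
    rw [show (Sum.inl ⟨w₀ ++ [], h⟩ : bagTree.V) = Sum.inl ⟨w₀, h₀⟩ by rw [this]]
    exact LabeledPath.refl _
  | a :: w, w₀, h, h₀ => by
    have hval : BagValid (w₀ ++ [a]) := by
      apply bagValid_prefix (w₂ := w)
      simpa [List.append_assoc] using h
    have hval2 : BagValid ((w₀ ++ [a]) ++ w) := by simpa [List.append_assoc] using h
    have hedge : bagTree.edge (Sum.inl ⟨w₀, h₀⟩) (some a) (Sum.inl ⟨w₀ ++ [a], hval⟩) :=
      ⟨a, rfl, rfl⟩
    have hrest := build_path w (w₀ ++ [a]) hval2 hval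
    have : (⟨(w₀ ++ [a]) ++ w, hval2⟩ : {w : List Bag // BagValid w}) = ⟨w₀ ++ a :: w, h⟩ := by
      simp
    rw [this] at hrest
    exact LabeledPath.step hedge hrest

lemma mem_pathLanguage_iff (w : List Bag) :
    w ∈ bagTree.pathLanguage ↔ BagValid w ∧
      w.count Bag.a = w.count Bag.b ∧ w.count Bag.c = w.count Bag.d := by
  constructor
  · rintro ⟨u, v, hpath, hedge⟩
    obtain ⟨h, rfl⟩ := path_char hpath [] bagValid_nil rfl
    match v, hedge with
    | Sum.inr v, ⟨_, _, hcnt⟩ =>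
      refine ⟨by simpa using h, ?_⟩
      simpa using hcnt
  · rintro ⟨hval, hab, hcd⟩
    have hpath := build_path w [] (by simpa using hval) bagValid_nil
    refine ⟨Sum.inl ⟨[] ++ w, by simpa using hval⟩, Sum.inr ⟨[] ++ w, by simpa using hval⟩,
      hpath, rfl, rfl, by simpa using hab, by simpa using hcd⟩

lemma prefix_append_cases {α} {q l₁ l₂ : List α} (h : q <+: l₁ ++ l₂) :
    q <+: l₁ ∨ ∃ r, q = l₁ ++ r ∧ r <+: l₂ := by
  rcases le_or_gt q.length l₁.length with hl | hl
  · exact Or.inl (List.prefix_of_prefix_length_le h (List.prefix_append _ _) hl)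
  · obtain ⟨r, rfl⟩ := List.prefix_of_prefix_length_le (List.prefix_append _ _) h hl.le
    exact Or.inr ⟨r, rfl, (List.prefix_append_right_inj l₁).mp h⟩

lemma prefix_replicate {α} {q : List α} {p : ℕ} {x : α} (h : q <+: List.replicate p x) :
    q = List.replicate q.length x ∧ q.length ≤ p := by
  have hs := h.sublist
  rw [List.sublist_replicate_iff] at hs
  obtain ⟨m, hm, rfl⟩ := hs
  simp [hm]

lemma length_eq_counts (l : List Bag) :
    l.length = l.count .a + l.count .b + l.count .c + l.count .d := by
  induction l with
  | nil => simp
  | cons x l ih => cases x <;> simp [List.count_cons, ih] <;> omega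

lemma quad_valid (p : ℕ) : BagValid (List.replicate p .a ++ List.replicate p .c ++
    List.replicate p .b ++ List.replicate p .d) := by
  intro q hq
  rw [List.append_assoc, List.append_assoc] at hq
  rcases prefix_append_cases hq with h1 | ⟨r1, rfl, hr1⟩
  · obtain ⟨hq', hle⟩ := prefix_replicate h1
    rw [hq']
    simp [List.count_replicate]
  rcases prefix_append_cases hr1 with h2 | ⟨r2, rfl, hr2⟩
  · obtain ⟨hq', hle⟩ := prefix_replicate h2
    rw [hq']
    simp [List.count_append, List.count_replicate]
  rcases prefix_append_cases hr2 with h3 | ⟨r3, rfl, hr3⟩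
  · obtain ⟨hq', hle⟩ := prefix_replicate h3
    rw [hq']
    constructor <;> simp [List.count_append, List.count_replicate] <;> omega
  · obtain ⟨hq', hle⟩ := prefix_replicate hr3
    rw [hq']
    constructor <;> simp [List.count_append, List.count_replicate] <;> omega

theorem main_result : ¬ (bagTree.pathLanguage).IsContextFree := by
  rintro ⟨g, hg⟩
  obtain ⟨p, hp⟩ := CFPump.cfg_pumping g
  set w : List Bag := List.replicate p .a ++ List.replicate p .c ++ List.replicate p .b ++
    List.replicate p .d with hw
  have hwmem : w ∈ g.language := by
    rw [hg, mem_pathLanguage_iff]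
    refine ⟨quad_valid p, by simp [hw, List.count_append, List.count_replicate],
      by simp [hw, List.count_append, List.count_replicate]⟩
  have hwlen : p ≤ w.length := by simp [hw]
  obtain ⟨u, v, x, y, z, hsplit, hvy, hvxy, hpump⟩ := hp w hwmem hwlen
  have h0 : (u ++ x ++ z) ∈ bagTree.pathLanguage := by
    have h := hpump 0
    rw [hg] at h
    simpa using h
  rw [mem_pathLanguage_iff] at h0
  obtain ⟨-, h0ab, h0cd⟩ := h0
  -- the contiguous middle segment
  have hws : w = (u ++ (v ++ x ++ y)) ++ z := by rw [hsplit]; simp [List.append_assoc]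
  have hlenw : w.length = 4 * p := by simp [hw]; omega
  have hlens : (v ++ x ++ y).length ≤ p := by simp; omega
  have hlened : w.length = u.length + (v ++ x ++ y).length + z.length := by
    rw [hws]; simp; omega
  -- three positional cases, each giving two vanishing letters on v,x,y
  have hzero : (((v ++ x ++ y).count Bag.b = 0 ∧ (v ++ x ++ y).count Bag.d = 0) ∨
      ((v ++ x ++ y).count Bag.a = 0 ∧ (v ++ x ++ y).count Bag.c = 0)) ∨
      ((v ++ x ++ y).count Bag.a = 0 ∧ (v ++ x ++ y).count Bag.d = 0) := by
    set s := v ++ x ++ y with hs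
    rcases le_or_gt (u.length + s.length) (2 * p) with hcase | hcase
    · left; left
      have h1 : u ++ s <+: w := ⟨z, by rw [hws]⟩
      have hR1 : List.replicate p Bag.a ++ List.replicate p Bag.c <+: w :=
        ⟨List.replicate p Bag.b ++ List.replicate p Bag.d, by simp [hw, List.append_assoc]⟩
      have h2 : u ++ s <+: List.replicate p Bag.a ++ List.replicate p Bag.c :=
        List.prefix_of_prefix_length_le h1 hR1 (by simp; omega)
      have h3 := ((List.suffix_append u s).sublist.trans h2.sublist)
      constructor
      · have := h3.count_le Bag.b
        simpa [List.count_append, List.count_replicate] using this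
      · have := h3.count_le Bag.d
        simpa [List.count_append, List.count_replicate] using this
    rcases le_or_gt (2 * p) u.length with hcase2 | hcase2
    · left; right
      have h1 : s ++ z <:+ w := ⟨u, by rw [hws]; simp [List.append_assoc]⟩
      have hR3 : List.replicate p Bag.b ++ List.replicate p Bag.d <:+ w :=
        ⟨List.replicate p Bag.a ++ List.replicate p Bag.c, by simp [hw, List.append_assoc]⟩
      have h2 : s ++ z <:+ List.replicate p Bag.b ++ List.replicate p Bag.d :=
        List.suffix_of_suffix_length_le h1 hR3 (by simp; omega)
      have h3 := ((List.prefix_append s z).sublist.trans h2.sublist)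
      constructor
      · have := h3.count_le Bag.a
        simpa [List.count_append, List.count_replicate] using this
      · have := h3.count_le Bag.c
        simpa [List.count_append, List.count_replicate] using this
    · right
      -- p ≤ |u| and |u| + |s| ≤ 3p : s is inside c^p ++ b^p
      have hup : p ≤ u.length := by omega
      have hu3p : (u ++ s).length ≤ 3 * p := by simp; omega
      have hQ : List.replicate p Bag.a ++ List.replicate p Bag.c ++ List.replicate p Bag.b
          <+: w := ⟨List.replicate p Bag.d, by simp [hw, List.append_assoc]⟩
      have h1 : u ++ s <+: _ := List.prefix_of_prefix_length_le ⟨z, by rw [hws]⟩ hQ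
        (by simp; omega)
      obtain ⟨rest, hrest⟩ := h1
      have hdrop : (u.drop p ++ s) ++ rest =
          List.replicate p Bag.c ++ List.replicate p Bag.b := by
        have := congrArg (List.drop p) hrest
        rw [List.drop_append_of_le_length (by simp; omega),
          List.drop_append_of_le_length hup] at this
        rw [this]
        rw [List.append_assoc, List.drop_append_of_le_length (by simp)]
        simp
      have h3 : s.Sublist (List.replicate p Bag.c ++ List.replicate p Bag.b) := by
        rw [← hdrop]
        exact ((List.suffix_append _ s).sublist.trans (List.prefix_append _ rest).sublist)
      constructor
      · have := h3.count_le Bag.a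
        simpa [List.count_append, List.count_replicate] using this
      · have := h3.count_le Bag.d
        simpa [List.count_append, List.count_replicate] using this
  -- assemble the arithmetic contradiction
  have hcw : ∀ t : Bag, w.count t = u.count t + v.count t + x.count t + y.count t + z.count t := by
    intro t
    rw [hsplit]
    simp [List.count_append]
    omega
  have hcwa : w.count Bag.a = p := by simp [hw, List.count_append, List.count_replicate]
  have hcwb : w.count Bag.b = p := by simp [hw, List.count_append, List.count_replicate]
  have hcwc : w.count Bag.c = p := by simp [hw, List.count_append, List.count_replicate]
  have hcwd : w.count Bag.d = p := by simp [hw, List.count_append, List.count_replicate]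
  have ha := hcw Bag.a
  have hb := hcw Bag.b
  have hc := hcw Bag.c
  have hd := hcw Bag.d
  rw [hcwa] at ha; rw [hcwb] at hb; rw [hcwc] at hc; rw [hcwd] at hd
  simp only [List.count_append] at h0ab h0cd hzero
  have hlv := length_eq_counts v
  have hly := length_eq_counts y
  omega

end BagProof

/-- The path language of the synchronization tree of the bag is not
context-free. -/
theorem bagTree_pathLanguage_not_contextFree :
    ¬ (bagTree.pathLanguage).IsContextFree := by
  exact BagProof.main_result
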